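/- Let 𝔇 be a nonempty symmetric set of tournaments on X. Suppose there exist distinct x, y ∈ X and a weighted tournament t ∈ pr-cl(𝔇) such that t(x,y) > 1/2 and t(u,v) = 1/2 for all distinct u, v ∈ X with {u,v} ≠ {x,y}. Then maj-cl(𝔇) is the set of all tournaments on X. -/

import Mathlib

open scoped BigOperators

variable {X : Type*}

/-- A tournament on `X`: irreflexive and, on distinct points, exactly one direction holds. -/
def IsTournament (R : X → X → Prop) : Prop :=
  (∀ x, ¬ R x x) ∧ ∀ x y : X, x ≠ y → (R x y ↔ ¬ R y x)

/-- Out-degree of `x` in the relation `R`. -/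
noncomputable def valT (R : X → X → Prop) (x : X) : ℕ :=
  Set.ncard {y | R x y}

/-- A tournament is balanced if every out-degree equals `(n-1)/2`. -/
def IsBalanced [Fintype X] (R : X → X → Prop) : Prop :=
  ∀ x : X, (valT R x : ℝ) = ((Fintype.card X : ℝ) - 1) / 2

/-- Action of a permutation on a relation. -/
def permAct (π : Equiv.Perm X) (R : X → X → Prop) : X → X → Prop :=
  fun x y => R (π.symm x) (π.symm y)

/-- A set of relations closed under the permutation action. -/
def SymmetricSet (D : Set (X → X → Prop)) : Prop :=
  ∀ (π : Equiv.Perm X), ∀ R ∈ D, permAct π R ∈ D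

/-- The majority closure of a set of tournaments. -/
def majCl [Fintype X] (D : Set (X → X → Prop)) : Set (X → X → Prop) :=
  {d | IsTournament d ∧ ∃ w : (X → X → Prop) → ℝ,
    (∀ c, 0 ≤ w c ∧ w c ≤ 1) ∧
    (∀ c, w c ≠ 0 → c ∈ D) ∧
    (Function.support w).Finite ∧
    (∑ᶠ c, w c) = 1 ∧
    ∀ x y : X, x ≠ y →
      (d x y ↔ 1 / 2 < ∑ᶠ c ∈ {c : X → X → Prop | c ∈ D ∧ c x y}, w c)}

open Classical in
noncomputable def tOf (d : X → X → Prop) : X → X → ℝ :=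
  fun x y => if d x y then 1 else 0

/-- pr-cl: the convex hull of `{t[d] : d ∈ D}`. -/
noncomputable def prCl (D : Set (X → X → Prop)) : Set (X → X → ℝ) :=
  convexHull ℝ (tOf '' D)

/-- `t` is a weighted tournament. -/
def IsWeighted (t : X → X → ℝ) : Prop :=
  ∀ x y : X, x ≠ y → 0 ≤ t x y ∧ t x y ≤ 1 ∧ t y x = 1 - t x y

/-- A weighted tournament is balanced if each row sums to `(n-1)/2`. -/
def BalancedW [Fintype X] (t : X → X → ℝ) : Prop :=
  ∀ x : X, (∑ᶠ y ∈ {y : X | y ≠ x}, t x y) = ((Fintype.card X : ℝ) - 1) / 2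

/-- A tournament is pseudo-balanced if it is dominated by a balanced weighted tournament. -/
def PseudoBalanced [Fintype X] (c : X → X → Prop) : Prop :=
  ∃ t : X → X → ℝ, IsWeighted t ∧ BalancedW t ∧
    ∀ x y : X, x ≠ y → c x y → 1 / 2 < t x y

open Classical in
noncomputable def tConfig (x y : X) (a s0 s1 : ℝ) : X → X → ℝ :=
  fun u v =>
    if u = v then 0
    else if u = x ∧ v = y then a
    else if u = y ∧ v = x then 1 - a
    else if u = x then s0
    else if v = x then 1 - s0
    else if u = y then s1
    else if v = y then 1 - s1
    else 1 / 2

/-- `Prd_ℓ(𝒟)`. -/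
noncomputable def PrdL [Fintype X] (l : ℕ) (D : Set (X → X → Prop)) : Set (ℝ × ℝ) :=
  {p | ∃ c ∈ D, ∃ x y : X, x ≠ y ∧ (c x y ↔ l = 1) ∧
    p.1 = (Set.ncard {z : X | z ≠ x ∧ z ≠ y ∧ c x z} : ℝ) / ((Fintype.card X : ℝ) - 2) ∧
    p.2 = (Set.ncard {z : X | z ≠ x ∧ z ≠ y ∧ c y z} : ℝ) / ((Fintype.card X : ℝ) - 2)}

/-- `Pr_A(𝒟)`. -/
noncomputable def PrA [Fintype X] (A : Set ℝ) (D : Set (X → X → Prop)) : Set (ℝ × ℝ) :=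
  {p | 0 ≤ p.1 ∧ p.1 ≤ 1 ∧ 0 ≤ p.2 ∧ p.2 ≤ 1 ∧
    ∃ x y : X, x ≠ y ∧ ∃ a ∈ A, tConfig x y a p.1 p.2 ∈ prCl D}

/-- `V_ℓ(d)` as a subset of `ℝ²`. -/
noncomputable def Vset [Fintype X] (l : ℕ) (d : X → X → Prop) : Set (ℝ × ℝ) :=
  {p | ∃ x y : X, x ≠ y ∧ (if l = 1 then d x y else d y x) ∧
    p = ((valT d x : ℝ), (valT d y : ℝ))}

/-- `V*_ℓ(d)`. -/
noncomputable def VstarSet [Fintype X] (l : ℕ) (d : X → X → Prop) : Set (ℝ × ℝ) :=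
  {p | ∃ q ∈ Vset l d, p = (q.1 - (l : ℝ), q.2 - (1 - (l : ℝ)))}

open Classical in
noncomputable def tCycle (k : ℕ) (xs : ℕ → X) (a : ℝ) : X → X → ℝ :=
  fun u v =>
    if u = v then 0
    else if ∃ i < k, u = xs i ∧ v = xs ((i + 1) % k) then a
    else if ∃ i < k, v = xs i ∧ u = xs ((i + 1) % k) then 1 - a
    else 1 / 2

open Classical in
noncomputable def tTriple (x y z : X) : X → X → ℝ :=
  fun u v =>
    if u = v then 0
    else if (u, v) = (x, y) ∨ (u, v) = (y, z) ∨ (u, v) = (z, x) then 1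
    else if (u, v) = (y, x) ∨ (u, v) = (z, y) ∨ (u, v) = (x, z) then 0
    else 1 / 2

/-- The dual (reverse) tournament. -/
def dualT (c : X → X → Prop) : X → X → Prop := fun x y => c y x

/-- The symmetric closure (orbit) of a single tournament. -/
def symCl (c : X → X → Prop) : Set (X → X → Prop) :=
  {d | ∃ π : Equiv.Perm X, d = permAct π c}

theorem stmt3 [Fintype X] (hcard : 3 ≤ Fintype.card X)
    (D : Set (X → X → Prop)) (hne : D.Nonempty) (hT : ∀ c ∈ D, IsTournament c)
    (hsym : SymmetricSet D)
    (x y : X) (hxy : x ≠ y) (t : X → X → ℝ) (ht : t ∈ prCl D)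
    (htxy : 1 / 2 < t x y)
    (hother : ∀ u v : X, u ≠ v → ({u, v} : Set X) ≠ ({x, y} : Set X) → t u v = 1 / 2) :
    majCl D = {c : X → X → Prop | IsTournament c} := by
  classical
  ext d
  simp only [Set.mem_setOf_eq]
  refine ⟨fun h => h.1, fun hd => ?_⟩
  -- extract convex combination
  rw [prCl, convexHull_eq] at ht
  obtain ⟨ι, s, w, z, hw0, hw1, hz, hcm⟩ := ht
  -- choose representing tournaments
  set ci : ι → (X → X → Prop) := fun i =>
    if h : z i ∈ tOf '' D then h.choose else hne.choose with hci
  have hciD : ∀ i ∈ s, ci i ∈ D := by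
    intro i hi
    simp only [hci, dif_pos (hz i hi)]
    exact (hz i hi).choose_spec.1
  have hciz : ∀ i ∈ s, tOf (ci i) = z i := by
    intro i hi
    simp only [hci, dif_pos (hz i hi)]
    exact (hz i hi).choose_spec.2
  -- evaluation of t
  have hteval : ∀ a b : X, t a b = ∑ i ∈ s, if ci i a b then w i else 0 := by
    intro a b
    have h1 := congrFun (congrFun hcm a) b
    rw [Finset.centerMass, hw1, inv_one, one_smul] at h1
    rw [← h1, Finset.sum_apply, Finset.sum_apply]
    refine Finset.sum_congr rfl fun i hi => ?_
    have : z i a b = tOf (ci i) a b := by rw [hciz i hi]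
    simp only [Pi.smul_apply, smul_eq_mul, this, tOf]
    by_cases h : ci i a b <;> simp [h]
  -- symmetry of t
  have htsymm : ∀ a b : X, a ≠ b → t a b + t b a = 1 := by
    intro a b hab
    rw [hteval a b, hteval b a, ← Finset.sum_add_distrib, ← hw1]
    refine Finset.sum_congr rfl fun i hi => ?_
    have hTi := hT _ (hciD i hi)
    by_cases h : ci i a b
    · have h2 : ¬ ci i b a := (hTi.2 a b hab).mp h
      simp [h, h2]
    · have h2 : ci i b a := by
        by_contra h2
        exact h ((hTi.2 a b hab).mpr h2)
      simp [h, h2]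
  -- permutations sending (x,y) to any ordered pair
  have hperm : ∀ u v : X, u ≠ v → ∃ π : Equiv.Perm X, π x = u ∧ π y = v := by
    intro u v huv
    refine ⟨(Equiv.swap x u).trans (Equiv.swap (Equiv.swap x u y) v), ?_, ?_⟩
    · simp only [Equiv.trans_apply, Equiv.swap_apply_left]
      refine Equiv.swap_apply_of_ne_of_ne ?_ huv
      intro h
      exact hxy ((Equiv.swap x u).injective
        ((Equiv.swap_apply_left x u).trans h))
    · simp only [Equiv.trans_apply, Equiv.swap_apply_left]
  set Pi2 : X × X → Equiv.Perm X := fun p =>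
    if h : p.1 ≠ p.2 then (hperm p.1 p.2 h).choose else 1 with hPi2
  have hPi2x : ∀ p : X × X, p.1 ≠ p.2 → Pi2 p x = p.1 ∧ Pi2 p y = p.2 := by
    intro p hp
    simp only [hPi2, dif_pos hp]
    exact (hperm p.1 p.2 hp).choose_spec
  -- the edge set of d
  set P : Finset (X × X) := Finset.univ.filter (fun p => d p.1 p.2) with hP
  have hPmem : ∀ p : X × X, p ∈ P ↔ d p.1 p.2 := by
    intro p; simp [hP]
  have hPne : ∀ p ∈ P, p.1 ≠ p.2 := by
    intro p hp heq
    have := (hPmem p).mp hp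
    rw [heq] at this
    exact hd.1 _ this
  have hPnonempty : P.Nonempty := by
    by_cases h : d x y
    · exact ⟨(x, y), (hPmem (x, y)).mpr h⟩
    · exact ⟨(y, x), (hPmem (y, x)).mpr ((hd.2 y x hxy.symm).mpr h)⟩
  have hm : 0 < P.card := Finset.card_pos.mpr hPnonempty
  have hmR : (0 : ℝ) < (P.card : ℝ) := by exact_mod_cast hm
  -- the weight function
  set F : X × X → ι → (X → X → Prop) := fun p i => permAct (Pi2 p) (ci i) with hF
  set W : (X → X → Prop) → ℝ := fun c =>
    (∑ p ∈ P, ∑ i ∈ s, if c = F p i then w i else 0) / P.card with hW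
  set T : Finset (X → X → Prop) := (P ×ˢ s).image (fun q => F q.1 q.2) with hTdef
  have hFT : ∀ p ∈ P, ∀ i ∈ s, F p i ∈ T := by
    intro p hp i hi
    exact Finset.mem_image.mpr ⟨(p, i), Finset.mem_product.mpr ⟨hp, hi⟩, rfl⟩
  have hWrep : ∀ c, W c ≠ 0 → ∃ p ∈ P, ∃ i ∈ s, c = F p i := by
    intro c hc
    have h1 : (∑ p ∈ P, ∑ i ∈ s, if c = F p i then w i else 0) ≠ 0 := by
      intro h; apply hc; simp [hW, h]
    obtain ⟨p, hp, h2⟩ := Finset.exists_ne_zero_of_sum_ne_zero h1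
    obtain ⟨i, hi, h3⟩ := Finset.exists_ne_zero_of_sum_ne_zero h2
    refine ⟨p, hp, i, hi, ?_⟩
    by_contra h4
    simp [h4] at h3
  have hWsupp : Function.support W ⊆ ↑T := by
    intro c hc
    obtain ⟨p, hp, i, hi, rfl⟩ := hWrep c hc
    exact hFT p hp i hi
  have hWD : ∀ c, W c ≠ 0 → c ∈ D := by
    intro c hc
    obtain ⟨p, hp, i, hi, rfl⟩ := hWrep c hc
    exact hsym (Pi2 p) _ (hciD i hi)
  have hW0 : ∀ c, 0 ≤ W c := by
    intro c
    apply div_nonneg _ hmR.le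
    refine Finset.sum_nonneg fun p hp => Finset.sum_nonneg fun i hi => ?_
    by_cases h : c = F p i <;> simp [h, hw0 i hi]
  have hWinner_le : ∀ c, (∑ p ∈ P, ∑ i ∈ s, if c = F p i then w i else 0)
      ≤ (P.card : ℝ) := by
    intro c
    calc (∑ p ∈ P, ∑ i ∈ s, if c = F p i then w i else 0)
        ≤ ∑ p ∈ P, ∑ i ∈ s, w i := by
          refine Finset.sum_le_sum fun p hp => Finset.sum_le_sum fun i hi => ?_
          by_cases h : c = F p i <;> simp [h, hw0 i hi]
      _ = (P.card : ℝ) := by simp [hw1]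
  have hW1 : ∀ c, W c ≤ 1 := by
    intro c
    rw [hW]
    rw [div_le_one hmR]
    exact hWinner_le c
  -- sum over T of the indicator
  have hindic : ∀ p ∈ P, ∀ i ∈ s, ∀ Q : Finset (X → X → Prop),
      (∀ c ∈ T, c ∈ Q ↔ c ∈ T ∧ c ∈ Q) → True := fun _ _ _ _ _ _ => trivial
  have hsumT : ∀ Q : Finset (X → X → Prop), (∑ c ∈ Q, W c) =
      (∑ p ∈ P, ∑ i ∈ s, if F p i ∈ Q then w i else 0) / P.card := by
    intro Q
    rw [← Finset.sum_div]
    congr 1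
    rw [Finset.sum_comm]
    refine Finset.sum_congr rfl fun p hp => ?_
    rw [Finset.sum_comm]
    refine Finset.sum_congr rfl fun i hi => ?_
    exact Finset.sum_ite_eq' Q (F p i) (fun _ => w i)
  have hWtotal : (∑ᶠ c, W c) = 1 := by
    rw [finsum_eq_finset_sum_of_support_subset W hWsupp, hsumT T]
    have : ∀ p ∈ P, ∀ i ∈ s, (if F p i ∈ T then w i else 0) = w i := by
      intro p hp i hi
      rw [if_pos (hFT p hp i hi)]
    rw [Finset.sum_congr rfl fun p hp => Finset.sum_congr rfl (this p hp)]
    simp [hw1]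
    exact hPnonempty.ne_empty
  refine ⟨hd, W, fun c => ⟨hW0 c, hW1 c⟩, hWD, T.finite_toSet.subset hWsupp, hWtotal, ?_⟩
  -- the majority condition
  intro u v huv
  set S : Set (X → X → Prop) := {c | c ∈ D ∧ c u v} with hS
  have hfin : (∑ᶠ c ∈ S, W c) = ∑ c ∈ T.filter (· ∈ S), W c := by
    apply finsum_mem_eq_sum_of_inter_support_eq
    ext c
    simp only [Set.mem_inter_iff, Finset.coe_filter, Set.mem_setOf_eq,
      Function.mem_support]
    constructor
    · rintro ⟨hcS, hc⟩
      exact ⟨⟨hWsupp hc, hcS⟩, hc⟩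
    · rintro ⟨⟨_, hcS⟩, hc⟩
      exact ⟨hcS, hc⟩
  have hval : ∀ p ∈ P, ∀ i ∈ s,
      (if F p i ∈ T.filter (· ∈ S) then w i else 0) =
      (if ci i ((Pi2 p).symm u) ((Pi2 p).symm v) then w i else 0) := by
    intro p hp i hi
    have hmemT := hFT p hp i hi
    have hmemD : F p i ∈ D := hsym (Pi2 p) _ (hciD i hi)
    have hiff : F p i ∈ T.filter (· ∈ S) ↔ F p i u v := by
      constructor
      · intro h
        exact ((Finset.mem_filter.mp h).2 : F p i ∈ S).2
      · intro h
        exact Finset.mem_filter.mpr ⟨hmemT, (⟨hmemD, h⟩ : F p i ∈ S)⟩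
    have hdefeq : F p i u v ↔ ci i ((Pi2 p).symm u) ((Pi2 p).symm v) := Iff.rfl
    by_cases h : ci i ((Pi2 p).symm u) ((Pi2 p).symm v)
    · rw [if_pos (hiff.mpr (hdefeq.mpr h)), if_pos h]
    · rw [if_neg (fun hc => h (hdefeq.mp (hiff.mp hc))), if_neg h]
  have hsumval : (∑ᶠ c ∈ S, W c) =
      (∑ p ∈ P, t ((Pi2 p).symm u) ((Pi2 p).symm v)) / P.card := by
    rw [hfin, hsumT]
    congr 1
    refine Finset.sum_congr rfl fun p hp => ?_
    rw [Finset.sum_congr rfl (hval p hp), ← hteval]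
  -- value of the per-edge term
  have hgother : ∀ p ∈ P, p ≠ (u, v) → p ≠ (v, u) →
      t ((Pi2 p).symm u) ((Pi2 p).symm v) = 1 / 2 := by
    intro p hp h1 h2
    have hne' : (Pi2 p).symm u ≠ (Pi2 p).symm v := fun h => huv ((Pi2 p).symm.injective h)
    refine hother _ _ hne' ?_
    intro hset
    have hpx := (hPi2x p (hPne p hp)).1
    have hpy := (hPi2x p (hPne p hp)).2
    rcases Set.pair_eq_pair_iff.mp hset with ⟨ha, hb⟩ | ⟨ha, hb⟩
    · apply h1
      have hu : u = p.1 := by rw [← hpx, ← ha, Equiv.apply_symm_apply]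
      have hv : v = p.2 := by rw [← hpy, ← hb, Equiv.apply_symm_apply]
      exact Prod.ext hu.symm hv.symm
    · apply h2
      have hu : u = p.2 := by rw [← hpy, ← ha, Equiv.apply_symm_apply]
      have hv : v = p.1 := by rw [← hpx, ← hb, Equiv.apply_symm_apply]
      exact Prod.ext hv.symm hu.symm
  have hgself : ∀ a b : X, a ≠ b → (a, b) ∈ P →
      t ((Pi2 (a, b)).symm u) ((Pi2 (a, b)).symm v) = t ((Pi2 (a, b)).symm u) ((Pi2 (a, b)).symm v) :=
    fun _ _ _ _ => rfl
  -- main computation for a distinguished edge p₀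
  have hmain : ∀ p₀ ∈ P, (∀ p ∈ P, p ≠ p₀ → p ≠ (u, v) ∧ p ≠ (v, u)) →
      (∑ p ∈ P, t ((Pi2 p).symm u) ((Pi2 p).symm v)) =
      t ((Pi2 p₀).symm u) ((Pi2 p₀).symm v) + ((P.card : ℝ) - 1) * (1 / 2) := by
    intro p₀ hp₀ hrest
    rw [← Finset.add_sum_erase P _ hp₀]
    congr 1
    have heq : ∀ p ∈ P.erase p₀, t ((Pi2 p).symm u) ((Pi2 p).symm v) = 1 / 2 := by
      intro p hp
      have hpP := Finset.mem_of_mem_erase hp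
      have hpne := Finset.ne_of_mem_erase hp
      exact hgother p hpP (hrest p hpP hpne).1 (hrest p hpP hpne).2
    rw [Finset.sum_congr rfl heq, Finset.sum_const, Finset.card_erase_of_mem hp₀]
    have h1 : (1 : ℕ) ≤ P.card := hm
    rw [nsmul_eq_mul]
    push_cast [Nat.cast_sub h1]
    ring
  by_cases hduv : d u v
  · -- (u,v) ∈ P, (v,u) ∉ P
    have hp₀ : (u, v) ∈ P := (hPmem (u, v)).mpr hduv
    have hvu : ¬ d v u := (hd.2 u v huv).mp hduv
    have hrest : ∀ p ∈ P, p ≠ (u, v) → p ≠ (u, v) ∧ p ≠ (v, u) := by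
      intro p hp h1
      refine ⟨h1, fun h2 => ?_⟩
      rw [h2] at hp
      exact hvu ((hPmem (v, u)).mp hp)
    have hPiuv1 : Pi2 (u, v) x = u := (hPi2x (u, v) huv).1
    have hPiuv2 : Pi2 (u, v) y = v := (hPi2x (u, v) huv).2
    have hsx : (Pi2 (u, v)).symm u = x := (Equiv.symm_apply_eq _).mpr hPiuv1.symm
    have hsy : (Pi2 (u, v)).symm v = y := (Equiv.symm_apply_eq _).mpr hPiuv2.symm
    rw [iff_true_intro hduv, true_iff, hsumval, hmain (u, v) hp₀ hrest, hsx, hsy]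
    rw [lt_div_iff₀ hmR]
    nlinarith [hmR]
  · -- (v,u) ∈ P, (u,v) ∉ P
    have hdvu : d v u := (hd.2 v u huv.symm).mpr hduv
    have hp₀ : (v, u) ∈ P := (hPmem (v, u)).mpr hdvu
    have hrest : ∀ p ∈ P, p ≠ (v, u) → p ≠ (u, v) ∧ p ≠ (v, u) := by
      intro p hp h1
      refine ⟨fun h2 => ?_, h1⟩
      rw [h2] at hp
      exact hduv ((hPmem (u, v)).mp hp)
    have hPiuv1 : Pi2 (v, u) x = v := (hPi2x (v, u) huv.symm).1
    have hPiuv2 : Pi2 (v, u) y = u := (hPi2x (v, u) huv.symm).2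
    have hsx : (Pi2 (v, u)).symm u = y := (Equiv.symm_apply_eq _).mpr hPiuv2.symm
    have hsy : (Pi2 (v, u)).symm v = x := (Equiv.symm_apply_eq _).mpr hPiuv1.symm
    rw [iff_false_intro hduv, false_iff, not_lt, hsumval, hmain (v, u) hp₀ hrest, hsx, hsy]
    have hyx : t y x = 1 - t x y := by
      have := htsymm x y hxy
      linarith
    rw [hyx, div_le_iff₀ hmR]
    nlinarith [hmR]
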